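/- If T ⊆ E is a set of edges such that the subgraph (V, T) is not connected (in particular if |T| < n for a graph on n+1 vertices), then there exists a nonzero vector c with c(1) = 0 that is constant along every edge of T; hence an MTD-resilient stealth attack a = Hc ≠ 0 exists. -/
import Mathlib

open Matrix

private lemma walk_exists_adj {V : Type*} {G : SimpleGraph V} (c : V → ℝ) :
    ∀ {u v : V} (_ : G.Walk u v), c u ≠ c v → ∃ a b, G.Adj a b ∧ c a ≠ c b := by
  intro u v p
  induction p with
  | nil => intro h; exact absurd rfl h
  | @cons a b e h p ih =>
    intro hne
    by_cases hcab : c a = c b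
    · exact ih (hcab ▸ hne)
    · exact ⟨a, b, h, hcab⟩

/-- If the subgraph of protected edges T is not connected, there
is a nonzero vertex function c vanishing at the reference (vertex 0) and
constant along every edge of T; hence a nonzero MTD-resilient stealth attack
a = Hc ≠ 0 exists (H being the reduced Jacobian of the connected network). -/
theorem disconnected_protection_admits_stealth (l n : ℕ)
    (A : Matrix (Fin l) (Fin (n + 1)) ℝ)
    (f t : Fin l → Fin (n + 1)) (hft : ∀ i, f i ≠ t i)
    (hAf : ∀ i, A i (f i) = 1) (hAt : ∀ i, A i (t i) = -1)
    (hA0 : ∀ i j, j ≠ f i → j ≠ t i → A i j = 0)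
    (d : Fin l → ℝ) (hd : ∀ i, d i ≠ 0)
    (hconn : (SimpleGraph.fromEdgeSet
        {s : Sym2 (Fin (n + 1)) | ∃ i : Fin l, s = s(f i, t i)}).Connected)
    (H : Matrix (Fin (n + 1) ⊕ (Fin l ⊕ Fin l)) (Fin n) ℝ)
    (hH : H = (Matrix.fromRows (Aᵀ * Matrix.diagonal d * A)
        (Matrix.fromRows (Matrix.diagonal d * A)
          (-(Matrix.diagonal d * A)))).submatrix id Fin.succ)
    (T : Finset (Fin l))
    (hdisc : ¬ (SimpleGraph.fromEdgeSet
        {s : Sym2 (Fin (n + 1)) | ∃ e ∈ T, s = s(f e, t e)}).Connected) :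
    ∃ c : Fin (n + 1) → ℝ, c ≠ 0 ∧ c 0 = 0 ∧
      (∀ e ∈ T, c (f e) = c (t e)) ∧
      H.mulVec (fun i : Fin n => c i.succ) ≠ 0 := by
  classical
  set GT := SimpleGraph.fromEdgeSet
      {s : Sym2 (Fin (n + 1)) | ∃ e ∈ T, s = s(f e, t e)} with hGT
  -- disconnected ⇒ some vertex not reachable from 0
  have hpre : ¬ GT.Preconnected := by
    intro h
    exact hdisc (SimpleGraph.Connected.mk h)
  rw [SimpleGraph.Preconnected] at hpre
  push_neg at hpre
  obtain ⟨u, v, huv⟩ := hpre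
  obtain ⟨w, hw⟩ : ∃ w, ¬ GT.Reachable 0 w := by
    by_contra hcon
    push_neg at hcon
    exact huv ((hcon u).symm.trans (hcon v))
  set c : Fin (n + 1) → ℝ := fun x => if GT.Reachable w x then 1 else 0 with hc
  have hc0 : c 0 = 0 := by
    simp only [hc]
    rw [if_neg (fun h => hw h.symm)]
  have hcw : c w = 1 := by simp only [hc]; rw [if_pos (SimpleGraph.Reachable.refl w)]
  have hcne : c ≠ 0 := by
    intro h
    have := congrFun h w
    rw [hcw] at this
    norm_num at this
  have hcT : ∀ e ∈ T, c (f e) = c (t e) := by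
    intro e he
    have hadj : GT.Adj (f e) (t e) := by
      rw [hGT, SimpleGraph.fromEdgeSet_adj]
      exact ⟨⟨e, he, rfl⟩, hft e⟩
    simp only [hc]
    by_cases h : GT.Reachable w (f e)
    · rw [if_pos h, if_pos (h.trans hadj.reachable)]
    · rw [if_neg h, if_neg (fun h' => h (h'.trans hadj.symm.reachable))]
  -- row sums: A i ⬝ c = c (f i) - c (t i)
  have hrow : ∀ i, ∑ j, A i j * c j = c (f i) - c (t i) := by
    intro i
    have : ∀ j, A i j * c j =
        (if j = f i then c (f i) else 0) + (if j = t i then -(c (t i)) else 0) := by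
      intro j
      by_cases h1 : j = f i
      · subst h1
        rw [if_pos rfl, if_neg (hft i), hAf i]
        ring
      · by_cases h2 : j = t i
        · subst h2
          rw [if_neg h1, if_pos rfl, hAt i]
          ring
        · rw [if_neg h1, if_neg h2, hA0 i j h1 h2]
          ring
    rw [Finset.sum_congr rfl fun j _ => this j, Finset.sum_add_distrib,
      Finset.sum_ite_eq' Finset.univ (f i) (fun _ => c (f i)),
      Finset.sum_ite_eq' Finset.univ (t i) (fun _ => -(c (t i)))]
    simp
    ring
  -- find an edge in the full graph with different c values
  have hne : c 0 ≠ c w := by rw [hc0, hcw]; norm_num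
  obtain ⟨a, b, hab, hcab⟩ :=
    walk_exists_adj c ((hconn.preconnected 0 w).some) hne
  rw [SimpleGraph.fromEdgeSet_adj] at hab
  obtain ⟨⟨i, hi⟩, -⟩ := hab
  rw [Sym2.eq_iff] at hi
  have hi' : c (f i) ≠ c (t i) := by
    rcases hi with ⟨ha, hb⟩ | ⟨ha, hb⟩
    · rw [← ha, ← hb]; exact hcab
    · rw [← ha, ← hb]; exact fun h => hcab h.symm
  refine ⟨c, hcne, hc0, hcT, ?_⟩
  intro hzero
  have hent := congrFun hzero (Sum.inr (Sum.inl i))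
  rw [hH] at hent
  simp only [Matrix.mulVec, Matrix.submatrix_apply, id_eq, Matrix.fromRows_apply_inr,
    Matrix.fromRows_apply_inl, dotProduct, Matrix.mul_apply, Matrix.diagonal_apply,
    Pi.zero_apply] at hent
  have hent' : ∑ j : Fin n, d i * A i j.succ * c j.succ = 0 := by
    convert hent using 2 with j
    rw [Finset.sum_eq_single i]
    · simp
    · intro b _ hb; rw [if_neg (Ne.symm hb), zero_mul]
    · simp
  have hsum : ∑ j : Fin n, A i j.succ * c j.succ = c (f i) - c (t i) := by
    have := hrow i
    rw [Fin.sum_univ_succ, hc0, mul_zero, zero_add] at this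
    exact this
  rw [show (fun j : Fin n => d i * A i j.succ * c j.succ)
      = fun j : Fin n => d i * (A i j.succ * c j.succ) by funext j; ring,
    ← Finset.mul_sum, hsum] at hent'
  rcases mul_eq_zero.mp hent' with h | h
  · exact hd i h
  · exact hi' (sub_eq_zero.mp h)
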